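/- Strict feasibility of the controller QP (key step in the proof of Proposition 4). Assume X_r is compact and nonempty, and that for every (x,u) ∈ X_r there exists q ∈ ℝ^m such that: if b(u) = 0 then ⟨∇b(u), q⟩ > 0, and if h_r(x,u) = 0 then (∂h_r/∂u)(x,u)·q + (∂h_r/∂x)(x,u)·f(x,u) > 0. Then there exist α_f > 0 and γ_f > 0 such that for all α > α_f and all γ > γ_f, for every (x,u) ∈ X_r there exists q ∈ ℝ^m with ⟨∇b(u), q⟩ + α·b(u) > 0 and (∂h_r/∂x)(x,u)·f(x,u) + (∂h_r/∂u)(x,u)·q + γ·h_r(x,u) > 0 (both inequalities strict). -/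

import Mathlib

open Set Filter Topology
open scoped RealInnerProductSpace

noncomputable def hseq {n m : ℕ}
    (f : EuclideanSpace ℝ (Fin n) × EuclideanSpace ℝ (Fin m) → EuclideanSpace ℝ (Fin n))
    (h : EuclideanSpace ℝ (Fin n) → ℝ) (β : ℝ) :
    ℕ → EuclideanSpace ℝ (Fin n) × EuclideanSpace ℝ (Fin m) → ℝ
  | 0 => fun p => h p.1
  | i + 1 => fun p =>
      fderiv ℝ (fun x => hseq f h β i (x, p.2)) p.1 (f p) + β * hseq f h β i p

noncomputable def Xset {n m : ℕ}
    (f : EuclideanSpace ℝ (Fin n) × EuclideanSpace ℝ (Fin m) → EuclideanSpace ℝ (Fin n))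
    (h : EuclideanSpace ℝ (Fin n) → ℝ) (b : EuclideanSpace ℝ (Fin m) → ℝ) (β : ℝ) (i : ℕ) :
    Set (EuclideanSpace ℝ (Fin n) × EuclideanSpace ℝ (Fin m)) :=
  {p | 0 ≤ h p.1 ∧ 0 ≤ b p.2 ∧ 0 ≤ hseq f h β i p}

/- ### Auxiliary lemmas -/

section aux

variable {n m : ℕ}

lemma fderiv_partial_fst (g : EuclideanSpace ℝ (Fin n) × EuclideanSpace ℝ (Fin m) → ℝ)
    {x : EuclideanSpace ℝ (Fin n)} {u : EuclideanSpace ℝ (Fin m)}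
    (hg : DifferentiableAt ℝ g (x, u)) (v : EuclideanSpace ℝ (Fin n)) :
    fderiv ℝ (fun y => g (y, u)) x v = fderiv ℝ g (x, u) (v, 0) := by
  have h1 : HasFDerivAt (fun y : EuclideanSpace ℝ (Fin n) => g (y, u))
      ((fderiv ℝ g (x, u)).comp (ContinuousLinearMap.inl ℝ _ _)) x :=
    hg.hasFDerivAt.comp x (hasFDerivAt_prodMk_left x u)
  rw [h1.fderiv]
  rfl

lemma fderiv_partial_snd (g : EuclideanSpace ℝ (Fin n) × EuclideanSpace ℝ (Fin m) → ℝ)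
    {x : EuclideanSpace ℝ (Fin n)} {u : EuclideanSpace ℝ (Fin m)}
    (hg : DifferentiableAt ℝ g (x, u)) (v : EuclideanSpace ℝ (Fin m)) :
    fderiv ℝ (fun y => g (x, y)) u v = fderiv ℝ g (x, u) (0, v) := by
  have h1 : HasFDerivAt (fun y : EuclideanSpace ℝ (Fin m) => g (x, y))
      ((fderiv ℝ g (x, u)).comp (ContinuousLinearMap.inr ℝ _ _)) u :=
    hg.hasFDerivAt.comp u (hasFDerivAt_prodMk_right x u)
  rw [h1.fderiv]
  rfl

lemma hseq_succ_eq
    (f : EuclideanSpace ℝ (Fin n) × EuclideanSpace ℝ (Fin m) → EuclideanSpace ℝ (Fin n))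
    (h : EuclideanSpace ℝ (Fin n) → ℝ) (β : ℝ) (i : ℕ)
    (hd : Differentiable ℝ (hseq f h β i))
    (p : EuclideanSpace ℝ (Fin n) × EuclideanSpace ℝ (Fin m)) :
    hseq f h β (i + 1) p = fderiv ℝ (hseq f h β i) p (f p, 0) + β * hseq f h β i p := by
  obtain ⟨x, u⟩ := p
  show fderiv ℝ (fun y => hseq f h β i (y, u)) x (f (x, u)) + _ = _
  rw [fderiv_partial_fst _ (hd (x, u))]

lemma hseq_contDiff
    (f : EuclideanSpace ℝ (Fin n) × EuclideanSpace ℝ (Fin m) → EuclideanSpace ℝ (Fin n))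
    (h : EuclideanSpace ℝ (Fin n) → ℝ) (β : ℝ) {r : ℕ}
    (hf : ContDiff ℝ (r + 1 : ℕ) f) (hh : ContDiff ℝ (r + 2 : ℕ) h) :
    ∀ i k : ℕ, i + k ≤ r → ContDiff ℝ ((k + 2 : ℕ)) (hseq f h β i) := by
  intro i
  induction i with
  | zero =>
    intro k hk
    exact (hh.comp contDiff_fst).of_le (by exact_mod_cast by omega)
  | succ i IH =>
    intro k hk
    have IH' : ContDiff ℝ ((k + 3 : ℕ)) (hseq f h β i) := IH (k + 1) (by omega)
    have hdiff : Differentiable ℝ (hseq f h β i) :=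
      IH'.differentiable (by simp)
    have h1 : ContDiff ℝ ((k + 2 : ℕ)) (fderiv ℝ (hseq f h β i)) :=
      IH'.fderiv_right (by exact_mod_cast by omega)
    have h2 : ContDiff ℝ ((k + 2 : ℕ))
        (fun p : EuclideanSpace ℝ (Fin n) × EuclideanSpace ℝ (Fin m) =>
          ((f p, 0) : EuclideanSpace ℝ (Fin n) × EuclideanSpace ℝ (Fin m))) :=
      (hf.of_le (by exact_mod_cast (show k + 2 ≤ r + 1 by omega))).prodMk contDiff_const
    have key : ContDiff ℝ ((k + 2 : ℕ))
        (fun p => fderiv ℝ (hseq f h β i) p (f p, 0) + β * hseq f h β i p) :=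
      (h1.clm_apply h2).add (contDiff_const.mul (IH'.of_le (by exact_mod_cast by omega)))
    have heq : hseq f h β (i + 1)
        = fun p => fderiv ℝ (hseq f h β i) p (f p, 0) + β * hseq f h β i p :=
      funext (hseq_succ_eq f h β i hdiff)
    rw [heq]
    exact key

/-- The key local step: if `g p₀ ≥ 0` and `c p₀ > 0` whenever `g p₀ = 0`, then near `p₀`
`c p + α * g p > 0` for all large enough `α`, provided `g p ≥ 0`. -/
lemma aux_step {P : Type*} [TopologicalSpace P] (g c : P → ℝ)
    (hg : Continuous g) (hc : Continuous c) (p₀ : P) (hg0 : 0 ≤ g p₀)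
    (hpos : g p₀ = 0 → 0 < c p₀) :
    ∃ α₀ > (0 : ℝ), ∃ U ∈ 𝓝 p₀, ∀ p ∈ U, 0 ≤ g p → ∀ α ≥ α₀, 0 < c p + α * g p := by
  rcases eq_or_lt_of_le hg0 with h0 | hgt
  · have hcp : 0 < c p₀ := hpos h0.symm
    refine ⟨1, one_pos, {p | 0 < c p}, (isOpen_lt continuous_const hc).mem_nhds hcp, ?_⟩
    intro p hp hgp α hα
    have h1 : 0 ≤ α * g p := mul_nonneg (le_trans zero_le_one hα) hgp
    have h2 : 0 < c p := hp
    linarith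
  · set d := g p₀ / 2 with hd
    have hdpos : 0 < d := half_pos hgt
    refine ⟨(|c p₀| + 1) / d, by positivity,
      {p | d < g p} ∩ {p | c p₀ - 1 < c p}, ?_, ?_⟩
    · exact Filter.inter_mem
        ((isOpen_lt continuous_const hg).mem_nhds (half_lt_self hgt))
        ((isOpen_lt continuous_const hc).mem_nhds (by simp))
    · intro p hp _ α hα
      have h1 : d < g p := hp.1
      have h2 : c p₀ - 1 < c p := hp.2
      have h3 : (|c p₀| + 1) / d * d = |c p₀| + 1 := div_mul_cancel₀ _ hdpos.ne'
      have h4 : (|c p₀| + 1) / d * d ≤ α * g p :=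
        mul_le_mul hα h1.le hdpos.le (le_trans (by positivity) hα)
      rw [h3] at h4
      have h5 := neg_abs_le (c p₀)
      linarith

end aux

/-- Strict feasibility of the controller QP (key step in the proof of Proposition 4): under the
hypotheses of Proposition 3, there exist `α_f, γ_f > 0` such that for all `α > α_f`, `γ > γ_f`,
the controller QP is strictly feasible at every point of `X_r`. -/
theorem qp_strict_feasibility
    {n m r : ℕ} (hn : 0 < n) (hm : 0 < m) (hr : 0 < r)
    (f : EuclideanSpace ℝ (Fin n) × EuclideanSpace ℝ (Fin m) → EuclideanSpace ℝ (Fin n))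
    (h : EuclideanSpace ℝ (Fin n) → ℝ) (b : EuclideanSpace ℝ (Fin m) → ℝ)
    (hf : ContDiff ℝ (r + 1 : ℕ) f) (hh : ContDiff ℝ (r + 2 : ℕ) h) (hb : ContDiff ℝ 2 b)
    (β : ℝ) (hβ : 0 < β)
    (hcomp : IsCompact (Xset f h b β r)) (hne : (Xset f h b β r).Nonempty)
    (hcq : ∀ p ∈ Xset f h b β r, ∃ q : EuclideanSpace ℝ (Fin m),
      (b p.2 = 0 → 0 < ⟪gradient b p.2, q⟫) ∧
      (hseq f h β r p = 0 →
        0 < fderiv ℝ (fun u => hseq f h β r (p.1, u)) p.2 q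
          + fderiv ℝ (fun x => hseq f h β r (x, p.2)) p.1 (f p))) :
    ∃ αf > (0 : ℝ), ∃ γf > (0 : ℝ), ∀ α > αf, ∀ γ > γf,
      ∀ p ∈ Xset f h b β r, ∃ q : EuclideanSpace ℝ (Fin m),
        0 < ⟪gradient b p.2, q⟫ + α * b p.2 ∧
        0 < fderiv ℝ (fun x => hseq f h β r (x, p.2)) p.1 (f p)
          + fderiv ℝ (fun u => hseq f h β r (p.1, u)) p.2 q + γ * hseq f h β r p := by
  classical
  set X := Xset f h b β r with hX
  set H := hseq f h β r with hHdef
  -- smoothness facts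
  have hH2 : ContDiff ℝ 2 H := by
    have := hseq_contDiff f h β hf hh r 0 (by omega)
    simpa [hHdef] using this
  have hHd : Differentiable ℝ H := hH2.differentiable (by norm_num)
  have hcontDH : Continuous (fderiv ℝ H) := hH2.continuous_fderiv (by norm_num)
  have hHc : Continuous H := hH2.continuous
  have hbd : Differentiable ℝ b := hb.differentiable (by norm_num)
  have hcontDb : Continuous (fderiv ℝ b) := hb.continuous_fderiv (by norm_num)
  have hbc : Continuous b := hb.continuous
  have hfc : Continuous f := hf.continuous
  -- reinterpretation of gradient and partial derivatives
  have hgrad : ∀ (u q : EuclideanSpace ℝ (Fin m)), ⟪gradient b u, q⟫ = fderiv ℝ b u q := by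
    intro u q
    rw [gradient]
    exact InnerProductSpace.toDual_symm_apply
  have hA : ∀ p : EuclideanSpace ℝ (Fin n) × EuclideanSpace ℝ (Fin m),
      fderiv ℝ (fun x => H (x, p.2)) p.1 (f p) = fderiv ℝ H p (f p, 0) := fun p =>
    fderiv_partial_fst H (hHd p) (f p)
  have hB : ∀ (p : EuclideanSpace ℝ (Fin n) × EuclideanSpace ℝ (Fin m))
      (q : EuclideanSpace ℝ (Fin m)),
      fderiv ℝ (fun u => H (p.1, u)) p.2 q = fderiv ℝ H p (0, q) := fun p q =>
    fderiv_partial_snd H (hHd p) q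
  -- local claim
  have key : ∀ p₀ ∈ X, ∃ q : EuclideanSpace ℝ (Fin m), ∃ α₀ > (0 : ℝ), ∃ γ₀ > (0 : ℝ),
      ∃ U ∈ 𝓝 p₀, ∀ p ∈ U, p ∈ X → ∀ α ≥ α₀, ∀ γ ≥ γ₀,
        0 < fderiv ℝ b p.2 q + α * b p.2 ∧
        0 < fderiv ℝ H p (f p, 0) + fderiv ℝ H p (0, q) + γ * H p := by
    intro p₀ hp₀
    obtain ⟨q, hq1, hq2⟩ := hcq p₀ hp₀
    have hc1c : Continuous fun p : EuclideanSpace ℝ (Fin n) × EuclideanSpace ℝ (Fin m) =>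
        fderiv ℝ b p.2 q := (hcontDb.comp continuous_snd).clm_apply continuous_const
    have hc2c : Continuous fun p : EuclideanSpace ℝ (Fin n) × EuclideanSpace ℝ (Fin m) =>
        fderiv ℝ H p (f p, 0) + fderiv ℝ H p (0, q) :=
      (hcontDH.clm_apply (hfc.prodMk continuous_const)).add
        (hcontDH.clm_apply continuous_const)
    obtain ⟨α₀, hα₀, U₁, hU₁, hstep1⟩ :=
      aux_step (fun p : EuclideanSpace ℝ (Fin n) × EuclideanSpace ℝ (Fin m) => b p.2)
        (fun p => fderiv ℝ b p.2 q) (hbc.comp continuous_snd) hc1c p₀ hp₀.2.1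
        (fun h0 => by have := hq1 h0; rwa [hgrad] at this)
    obtain ⟨γ₀, hγ₀, U₂, hU₂, hstep2⟩ :=
      aux_step H (fun p => fderiv ℝ H p (f p, 0) + fderiv ℝ H p (0, q)) hHc hc2c p₀ hp₀.2.2
        (fun h0 => by
          have := hq2 h0
          rw [hA p₀, hB p₀ q] at this
          show 0 < fderiv ℝ H p₀ (f p₀, 0) + fderiv ℝ H p₀ (0, q)
          linarith)
    refine ⟨q, α₀, hα₀, γ₀, hγ₀, U₁ ∩ U₂, Filter.inter_mem hU₁ hU₂, ?_⟩
    intro p hp hpX α hα γ hγ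
    exact ⟨hstep1 p hp.1 hpX.2.1 α hα, hstep2 p hp.2 hpX.2.2 γ hγ⟩
  -- extract data via choice
  choose q α₀ hα₀ γ₀ hγ₀ U hU hloc using key
  -- compactness: finite subcover
  obtain ⟨t, ht⟩ := hcomp.elim_nhds_subcover' U hU
  have htne : t.Nonempty := by
    obtain ⟨p, hp⟩ := hne
    obtain ⟨x, hx, -⟩ := Set.mem_iUnion₂.mp (ht hp)
    exact ⟨x, hx⟩
  set αf := t.sup' htne (fun x => α₀ x.1 x.2) with hαf
  set γf := t.sup' htne (fun x => γ₀ x.1 x.2) with hγf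
  obtain ⟨x₀, hx₀⟩ := htne
  have hαfpos : 0 < αf := lt_of_lt_of_le (hα₀ x₀.1 x₀.2) (Finset.le_sup' (fun x => α₀ x.1 x.2) hx₀)
  have hγfpos : 0 < γf := lt_of_lt_of_le (hγ₀ x₀.1 x₀.2) (Finset.le_sup' (fun x => γ₀ x.1 x.2) hx₀)
  refine ⟨αf, hαfpos, γf, hγfpos, ?_⟩
  intro α hα γ hγ p hp
  obtain ⟨x, hxt, hpU⟩ := Set.mem_iUnion₂.mp (ht hp)
  have hαx : α₀ x.1 x.2 ≤ α := le_of_lt (lt_of_le_of_lt (Finset.le_sup' (fun x => α₀ x.1 x.2) hxt) hα)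
  have hγx : γ₀ x.1 x.2 ≤ γ := le_of_lt (lt_of_le_of_lt (Finset.le_sup' (fun x => γ₀ x.1 x.2) hxt) hγ)
  obtain ⟨hgoal1, hgoal2⟩ := hloc x.1 x.2 p hpU hp α hαx γ hγx
  refine ⟨q x.1 x.2, ?_, ?_⟩
  · rw [hgrad]; exact hgoal1
  · rw [hA p, hB p]; exact hgoal2
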